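/- (Information-form equivalence of Gated KalmaNet in the ungated limit.) Fix key vectors k_t ∈ ℝ^{d_k}, value vectors v_t ∈ ℝ^{d_v}, scalars β_t ≥ 0, and a constant λ > 0. Define H_t = H_{t−1} + β_t k_t k_t^⊤ and U_t = U_{t−1} + β_t v_t k_t^⊤ with H_0 = 0, U_0 = 0; set Φ_t = (H_t + λ I)^{−1} (well defined since H_t is positive semidefinite and λ > 0), g_t = β_t Φ_t k_t ∈ ℝ^{d_k}, and S_t = U_t Φ_t ∈ ℝ^{d_v×d_k}. Then S_0 = 0 and, for every t ≥ 1, S_t = S_{t−1}(I − k_t g_t^⊤) + v_t g_t^⊤. -/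

import Mathlib

open Matrix

noncomputable section

lemma myVecMulVec_mul {m n p : Type*} [Fintype n] (a : m → ℝ) (b : n → ℝ)
    (C : Matrix n p ℝ) : Matrix.vecMulVec a b * C = Matrix.vecMulVec a (b ᵥ* C) := by
  ext i j
  simp [vecMulVec_apply, mul_apply, vecMul, dotProduct, Finset.mul_sum, mul_assoc]

lemma myVecMulVec_smul_right {m n : Type*} (a : m → ℝ) (c : ℝ) (b : n → ℝ) :
    Matrix.vecMulVec a (c • b) = c • Matrix.vecMulVec a b := by
  ext i j
  simp [vecMulVec_apply, mul_comm, mul_left_comm]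

lemma myVecMulVec_mulVec {m n : Type*} [Fintype n] (a : m → ℝ) (b : n → ℝ) (x : n → ℝ) :
    Matrix.vecMulVec a b *ᵥ x = (b ⬝ᵥ x) • a := by
  ext i
  simp [mulVec, dotProduct, vecMulVec_apply, Finset.sum_mul, Finset.mul_sum]
  ring_nf

lemma myVecMulVec_posSemidef {n : Type*} [Fintype n] (k : n → ℝ) :
    (Matrix.vecMulVec k k).PosSemidef := by
  refine Matrix.PosSemidef.of_dotProduct_mulVec_nonneg ?_ ?_
  · ext i j; simp [vecMulVec_apply, mul_comm]
  · intro x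
    rw [myVecMulVec_mulVec]
    simp only [dotProduct_smul, smul_eq_mul]
    have : star x ⬝ᵥ k = k ⬝ᵥ x := by simp [dotProduct, mul_comm]
    rw [this]
    exact mul_self_nonneg _

/-- Ungated information matrix: `H 0 = 0`, `H t = H (t-1) + β t • k t k tᵀ`. -/
def infoH {dk : ℕ} (kv : ℕ → Fin dk → ℝ) (β : ℕ → ℝ) :
    ℕ → Matrix (Fin dk) (Fin dk) ℝ
  | 0 => 0
  | t + 1 => infoH kv β t + β (t + 1) • Matrix.vecMulVec (kv (t + 1)) (kv (t + 1))

/-- Ungated information state: `U 0 = 0`, `U t = U (t-1) + β t • v t k tᵀ`. -/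
def infoU {dk dv : ℕ} (kv : ℕ → Fin dk → ℝ) (vv : ℕ → Fin dv → ℝ) (β : ℕ → ℝ) :
    ℕ → Matrix (Fin dv) (Fin dk) ℝ
  | 0 => 0
  | t + 1 => infoU kv vv β t + β (t + 1) • Matrix.vecMulVec (vv (t + 1)) (kv (t + 1))

/-- Information-form equivalence of Gated KalmaNet in the ungated limit: with
`Φ t = (H t + λ I)⁻¹`, `g t = β t • Φ t k t`, and `S t = U t Φ t`, the readout state
satisfies `S 0 = 0` and the GKA recurrence
`S t = S (t-1) (I − k t g tᵀ) + v t g tᵀ` for every `t ≥ 1`. -/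
theorem gka_information_form_equivalence (dk dv : ℕ)
    (kv : ℕ → Fin dk → ℝ) (vv : ℕ → Fin dv → ℝ) (β : ℕ → ℝ) (hβ : ∀ t, 0 ≤ β t)
    (lam : ℝ) (hlam : 0 < lam) :
    let Φ : ℕ → Matrix (Fin dk) (Fin dk) ℝ :=
      fun t => (infoH kv β t + lam • (1 : Matrix (Fin dk) (Fin dk) ℝ))⁻¹
    let g : ℕ → Fin dk → ℝ := fun t => β t • (Φ t).mulVec (kv t)
    let S : ℕ → Matrix (Fin dv) (Fin dk) ℝ := fun t => infoU kv vv β t * Φ t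
    S 0 = 0
    ∧ ∀ t : ℕ,
        S (t + 1)
          = S t * ((1 : Matrix (Fin dk) (Fin dk) ℝ)
                    - Matrix.vecMulVec (kv (t + 1)) (g (t + 1)))
            + Matrix.vecMulVec (vv (t + 1)) (g (t + 1)) := by
  intro Φ g S
  set M : ℕ → Matrix (Fin dk) (Fin dk) ℝ :=
    fun t => infoH kv β t + lam • (1 : Matrix (Fin dk) (Fin dk) ℝ) with hM
  -- positive semidefiniteness of infoH
  have hPSD : ∀ t, (infoH kv β t).PosSemidef := by
    intro t
    induction t with
    | zero => exact Matrix.PosSemidef.zero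
    | succ n ih =>
      refine ih.add ?_
      refine Matrix.PosSemidef.of_dotProduct_mulVec_nonneg ?_ (fun x => ?_)
      · have := (myVecMulVec_posSemidef (kv (n+1))).1
        simpa [Matrix.IsHermitian] using congrArg (fun A => β (n+1) • A) this
      · rw [smul_mulVec, dotProduct_smul, smul_eq_mul]
        exact mul_nonneg (hβ (n+1)) ((myVecMulVec_posSemidef (kv (n+1))).dotProduct_mulVec_nonneg x)
  have hPD : ∀ t, (M t).PosDef := by
    intro t
    refine Matrix.PosDef.posSemidef_add (hPSD t) ?_
    refine Matrix.PosDef.of_dotProduct_mulVec_pos ?_ (fun x hx => ?_)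
    · simp [Matrix.IsHermitian]
    · rw [smul_mulVec, one_mulVec, dotProduct_smul, smul_eq_mul]
      exact mul_pos hlam (Matrix.dotProduct_star_self_pos_iff.mpr hx)
  have hMul : ∀ t, M t * Φ t = 1 := fun t =>
    Matrix.mul_nonsing_inv _ ((Matrix.isUnit_iff_isUnit_det _).mp (hPD t).isUnit)
  have hMul' : ∀ t, Φ t * M t = 1 := fun t =>
    Matrix.nonsing_inv_mul _ ((Matrix.isUnit_iff_isUnit_det _).mp (hPD t).isUnit)
  have hSymM : ∀ t, (M t)ᵀ = M t := by
    intro t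
    have h := (hPD t).isHermitian
    simpa [Matrix.IsHermitian] using h
  have hSymΦ : ∀ t, (Φ t)ᵀ = Φ t := by
    intro t
    show (M t)⁻¹ᵀ = (M t)⁻¹
    rw [Matrix.transpose_nonsing_inv, hSymM t]
  constructor
  · show infoU kv vv β 0 * Φ 0 = 0
    simp [infoU]
  · intro t
    have hkB : kv (t+1) ᵥ* Φ (t+1) = Φ (t+1) *ᵥ kv (t+1) := by
      conv_lhs => rw [← hSymΦ (t+1)]
      exact Matrix.vecMul_transpose _ _
    have hMstep : M (t+1) = M t + β (t+1) • Matrix.vecMulVec (kv (t+1)) (kv (t+1)) := by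
      simp only [hM, infoH]
      abel
    have h1 : M t * Φ (t+1)
        = 1 - β (t+1) • Matrix.vecMulVec (kv (t+1)) (kv (t+1) ᵥ* Φ (t+1)) := by
      have : M t = M (t+1) - β (t+1) • Matrix.vecMulVec (kv (t+1)) (kv (t+1)) := by
        rw [hMstep]; abel
      rw [this, sub_mul, hMul (t+1), smul_mul_assoc, myVecMulVec_mul]
    have hB : Φ (t+1)
        = Φ t * (1 - β (t+1) • Matrix.vecMulVec (kv (t+1)) (kv (t+1) ᵥ* Φ (t+1))) := by
      rw [← h1, ← mul_assoc, hMul' t, one_mul]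
    show infoU kv vv β (t+1) * Φ (t+1)
        = infoU kv vv β t * Φ t * (1 - Matrix.vecMulVec (kv (t+1)) (g (t+1)))
          + Matrix.vecMulVec (vv (t+1)) (g (t+1))
    have hg : g (t+1) = β (t+1) • (Φ (t+1) *ᵥ kv (t+1)) := rfl
    rw [hg, myVecMulVec_smul_right, myVecMulVec_smul_right, ← hkB]
    rw [show infoU kv vv β (t+1)
        = infoU kv vv β t + β (t+1) • Matrix.vecMulVec (vv (t+1)) (kv (t+1)) from rfl]
    rw [Matrix.add_mul, Matrix.smul_mul, myVecMulVec_mul]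
    rw [Matrix.mul_assoc, ← hB]
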